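/- arXiv:2310.03124 — 4 statements merged into one kernel-verified Lean document; each statement's English description precedes it below -/
import Mathlib

section
/- (Theorem 3.1, Part I) If the reward function f satisfies (A1) and (A2) with some exponent γ > 0, then for every starting point (x1, x2) ∈ ℝ² there exist infinitely many Nash equilibria (τ1, τ2) of the two-player stopping game in which both players receive infinite expected payoffs, i.e., J_1(τ1, τ2, x1, x2) = ∞ and J_2(τ2, τ1, x1, x2) = ∞. -/
open MeasureTheory ProbabilityTheory Filter Set
open scoped ENNReal Classical

noncomputable section

namespace DynkinGame

variable {Ω : Type*} [MeasurableSpace Ω]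

/-- The σ-algebra generated by the process `W` up to time `t` (natural filtration). -/
def natFilt (W : ℝ → Ω → ℝ) (t : ℝ) : MeasurableSpace Ω :=
  ⨆ s ∈ Set.Icc (0 : ℝ) t, MeasurableSpace.comap (W s) inferInstance

/-- The σ-algebra generated by the whole process `W`. -/
def processSigma (W : ℝ → Ω → ℝ) : MeasurableSpace Ω :=
  ⨆ s ∈ Set.Ici (0 : ℝ), MeasurableSpace.comap (W s) inferInstance

/-- `W` is a standard Brownian motion started at `0` under `P`:
measurable marginals, `W 0 = 0`, a.s. continuous paths, Gaussian increments
`W t - W s ∼ N(0, t - s)`, and increments independent of the past. -/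
structure IsBM (P : Measure Ω) (W : ℝ → Ω → ℝ) : Prop where
  meas : ∀ t, Measurable (W t)
  init : ∀ ω, W 0 ω = 0
  cont : ∀ᵐ ω ∂P, Continuous fun t => W t ω
  incr : ∀ s t : ℝ, 0 ≤ s → s ≤ t →
    Measure.map (fun ω => W t ω - W s ω) P = gaussianReal 0 (Real.toNNReal (t - s))
  indep_incr : ∀ s t : ℝ, 0 ≤ s → s ≤ t →
    Indep (MeasurableSpace.comap (fun ω => W t ω - W s ω) inferInstance) (natFilt W s) P

/-- `τ`, with values in `[0, ∞]`, is a stopping time for the natural filtration of `W`. -/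
def IsStopTime (W : ℝ → Ω → ℝ) (τ : Ω → ℝ≥0∞) : Prop :=
  ∀ t : ℝ, 0 ≤ t → MeasurableSet[natFilt W t] {ω | τ ω ≤ ENNReal.ofReal t}

/-- The value of the process at the (possibly infinite) random time `τ`
(irrelevant junk value `W 0 ω` on `{τ = ∞}`). -/
def stopVal (W : ℝ → Ω → ℝ) (τ : Ω → ℝ≥0∞) (ω : Ω) : ℝ :=
  W (τ ω).toReal ω

/-- Extended-real expectation `E[X] = E[X⁺] - E[X⁻]`. -/
def EE (P : Measure Ω) (X : Ω → ℝ) : EReal :=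
  ((∫⁻ ω, ENNReal.ofReal (X ω) ∂P : ℝ≥0∞) : EReal)
    - ((∫⁻ ω, ENNReal.ofReal (-X ω) ∂P : ℝ≥0∞) : EReal)

/-- `E[X]` is well defined (not of the form `∞ - ∞`). -/
def WellDef (P : Measure Ω) (X : Ω → ℝ) : Prop :=
  (∫⁻ ω, ENNReal.ofReal (X ω) ∂P) ≠ ⊤ ∨ (∫⁻ ω, ENNReal.ofReal (-X ω) ∂P) ≠ ⊤

/-- Admissible strategies of a player observing `W` with starting point `x`:
stopping times of `W` for which `E[f(x + W_τ)]` is well defined. -/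
def Adm (P : Measure Ω) (f : ℝ → ℝ) (x : ℝ) (W : ℝ → Ω → ℝ) (τ : Ω → ℝ≥0∞) : Prop :=
  IsStopTime W τ ∧ WellDef P fun ω => f (x + stopVal W τ ω)

/-- The pathwise payoff `f(x + W_τ) (1_{τ < σ} + (1/2) 1_{τ = σ < ∞})` of a player stopping
at `τ` when the opponent stops at `σ`. -/
def payoff (f : ℝ → ℝ) (x : ℝ) (W : ℝ → Ω → ℝ) (τ σ : Ω → ℝ≥0∞) (ω : Ω) : ℝ :=
  f (x + stopVal W τ ω) *
    ((if τ ω < σ ω then 1 else 0) + (if τ ω = σ ω ∧ τ ω ≠ ⊤ then (1 : ℝ) / 2 else 0))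

/-- The expected payoff of a player using `τ` against `σ`. -/
def J (P : Measure Ω) (f : ℝ → ℝ) (x : ℝ) (W : ℝ → Ω → ℝ) (τ σ : Ω → ℝ≥0∞) : EReal :=
  EE P (payoff f x W τ σ)

/-- Nash equilibrium of the two-player stopping game started at `(x₁, x₂)`. -/
def Nash (P : Measure Ω) (f : ℝ → ℝ) (x₁ x₂ : ℝ) (W₁ W₂ : ℝ → Ω → ℝ)
    (τ₁ τ₂ : Ω → ℝ≥0∞) : Prop :=
  Adm P f x₁ W₁ τ₁ ∧ Adm P f x₂ W₂ τ₂ ∧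
  (∀ σ, Adm P f x₁ W₁ σ → J P f x₁ W₁ σ τ₂ ≤ J P f x₁ W₁ τ₁ τ₂) ∧
  (∀ σ, Adm P f x₂ W₂ σ → J P f x₂ W₂ σ τ₁ ≤ J P f x₂ W₂ τ₂ τ₁)

/-- The discount function `c(t) = P(σ > t) + (1/2) P(σ = t < ∞)`, `c(∞) = 0`, induced by the
opponent's stopping time `σ`. -/
def disc (P : Measure Ω) (σ : Ω → ℝ≥0∞) (t : ℝ≥0∞) : ℝ :=
  if t = ⊤ then 0
  else (P {ω | t < σ ω}).toReal + (1 / 2) * (P {ω | σ ω = t}).toReal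

/-- The full two-player setup: a probability measure carrying two independent standard
Brownian motions started at `0`. -/
structure Setup (P : Measure Ω) (W₁ W₂ : ℝ → Ω → ℝ) : Prop where
  prob : IsProbabilityMeasure P
  bm₁ : IsBM P W₁
  bm₂ : IsBM P W₂
  indep : Indep (processSigma W₁) (processSigma W₂) P

/-- Assumption (A1): `f < 0` on `(-∞, 0)` and `f ≥ 0` on `[0, ∞)`. -/
def A1 (f : ℝ → ℝ) : Prop :=
  (∀ x < (0 : ℝ), f x < 0) ∧ ∀ x ≥ (0 : ℝ), 0 ≤ f x

/-- Assumption (A2) with exponent `γ`: `liminf_{x → ∞} f x / x ^ γ > 0`. -/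
def A2 (f : ℝ → ℝ) (γ : ℝ) : Prop :=
  0 < liminf (fun x : ℝ => f x / x ^ γ) atTop

/-- An extended-real payoff value is finite. -/
def FiniteP (v : EReal) : Prop := v ≠ ⊤ ∧ v ≠ ⊥

/-- First nonnegative time at which the (time-dependent) property `A` holds, as an
`ℝ≥0∞`-valued random time (`∞` if it never holds). -/
def hitTime (A : ℝ → Ω → Prop) (ω : Ω) : ℝ≥0∞ :=
  sInf (ENNReal.ofReal '' {t : ℝ | 0 ≤ t ∧ A t ω})

/-- The first time after the hitting time of the origin at which `x + W` lies above the
square-root boundary `a √(s - σ + 1)`, where `σ` is the hitting time of the origin. -/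
def sqrtBdryTime (W : ℝ → Ω → ℝ) (x a : ℝ) (ω : Ω) : ℝ≥0∞ :=
  sInf (ENNReal.ofReal ''
    {s : ℝ | 0 ≤ s ∧ hitTime (fun t ω' => x + W t ω' = 0) ω ≤ ENNReal.ofReal s ∧
      a * Real.sqrt (s - (hitTime (fun t ω' => x + W t ω' = 0) ω).toReal + 1) ≤ x + W s ω})

end DynkinGame

namespace DynkinGame

section Aux

variable {Ω : Type*} [MeasurableSpace Ω]

def bdry (R : ℝ) (k : ℕ) : ℝ := Real.sqrt (R ^ k)

lemma bdry_eq_pow {R : ℝ} (hR : 0 ≤ R) (k : ℕ) : bdry R k = Real.sqrt R ^ k := by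
  induction k with
  | zero => simp [bdry]
  | succ n ih =>
      rw [bdry, pow_succ, Real.sqrt_mul (pow_nonneg hR n), ← bdry, ih, pow_succ]

lemma bdry_nonneg (R : ℝ) (k : ℕ) : 0 ≤ bdry R k := Real.sqrt_nonneg _

lemma bdry_succ {R : ℝ} (hR : 0 ≤ R) (k : ℕ) :
    bdry R (k + 1) = Real.sqrt R * bdry R k := by
  rw [bdry_eq_pow hR, bdry_eq_pow hR, pow_succ, mul_comm]

def trigSet (W : ℝ → Ω → ℝ) (x R : ℝ) (k : ℕ) : Set Ω :=
  {ω | bdry R k ≤ x + W (R ^ k) ω}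

def goodSet (W : ℝ → Ω → ℝ) (x R : ℝ) (k : ℕ) : Set Ω :=
  {ω | 0 ≤ x + W (R ^ k) ω ∧ x + W (R ^ k) ω < bdry R k}

def AAset (W : ℝ → Ω → ℝ) (x R : ℝ) (k : ℕ) : Set Ω :=
  ⋂ j ∈ Set.Iic k, goodSet W x R j

def hitSet (W : ℝ → Ω → ℝ) (x R : ℝ) (k : ℕ) : Set Ω :=
  (⋂ j ∈ Set.Ico 1 k, (trigSet W x R j)ᶜ) ∩ trigSet W x R k

def myTau (W : ℝ → Ω → ℝ) (x R : ℝ) (ω : Ω) : ℝ≥0∞ :=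
  if h : ∃ k, 1 ≤ k ∧ ω ∈ trigSet W x R k then ENNReal.ofReal (R ^ Nat.find h) else ⊤

lemma not_trig_of_good {W : ℝ → Ω → ℝ} {x R : ℝ} {k : ℕ} {ω : Ω}
    (h : ω ∈ goodSet W x R k) : ω ∉ trigSet W x R k :=
  fun h' => absurd h.2 (not_lt.mpr h')

lemma myTau_eq_of_hitSet {W : ℝ → Ω → ℝ} {x R : ℝ} {k : ℕ} {ω : Ω}
    (hk : 1 ≤ k) (hω : ω ∈ hitSet W x R k) :
    myTau W x R ω = ENNReal.ofReal (R ^ k) := by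
  have hex : ∃ m, 1 ≤ m ∧ ω ∈ trigSet W x R m := ⟨k, hk, hω.2⟩
  rw [myTau, dif_pos hex]
  congr 1
  have : Nat.find hex = k := by
    rw [Nat.find_eq_iff]
    refine ⟨⟨hk, hω.2⟩, fun j hj => ?_⟩
    rintro ⟨hj1, hjt⟩
    exact (Set.mem_iInter₂.mp hω.1 j (Set.mem_Ico.mpr ⟨hj1, hj⟩)) hjt
  rw [this]

lemma myTau_cases (W : ℝ → Ω → ℝ) (x R : ℝ) (ω : Ω) :
    myTau W x R ω = ⊤ ∨
      ∃ k, 1 ≤ k ∧ ω ∈ hitSet W x R k ∧ myTau W x R ω = ENNReal.ofReal (R ^ k) := by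
  by_cases hex : ∃ m, 1 ≤ m ∧ ω ∈ trigSet W x R m
  · right
    obtain ⟨hk1, htrig⟩ := Nat.find_spec hex
    refine ⟨Nat.find hex, hk1, ⟨?_, htrig⟩, ?_⟩
    · refine Set.mem_biInter fun j hj => ?_
      rcases Set.mem_Ico.mp hj with ⟨hj1, hjlt⟩
      exact fun hjt => Nat.find_min hex hjlt ⟨hj1, hjt⟩
    · rw [myTau, dif_pos hex]
  · left; rw [myTau, dif_neg hex]

lemma hitSet_of_good {W : ℝ → Ω → ℝ} {x R : ℝ} {k : ℕ} {ω : Ω}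
    (hg : ∀ j ≤ k, ω ∈ goodSet W x R j) (ht : ω ∈ trigSet W x R (k + 1)) :
    ω ∈ hitSet W x R (k + 1) := by
  refine ⟨Set.mem_biInter fun j hj => ?_, ht⟩
  rcases Set.mem_Ico.mp hj with ⟨_, hjlt⟩
  exact not_trig_of_good (hg j (Nat.lt_succ_iff.mp hjlt))

lemma myTau_gt_of_AA {W : ℝ → Ω → ℝ} {x R : ℝ} (hR : 1 < R) {k : ℕ} {ω : Ω}
    (hA : ω ∈ AAset W x R k) :
    ENNReal.ofReal (R ^ k) < myTau W x R ω := by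
  rcases myTau_cases W x R ω with h | ⟨m, hm1, hmh, hmv⟩
  · rw [h]; exact ENNReal.ofReal_lt_top
  · rw [hmv]
    have hR0 : (0:ℝ) < R := lt_trans one_pos hR
    have hkm : k < m := by
      by_contra hc
      push_neg at hc
      exact not_trig_of_good (Set.mem_iInter₂.mp hA m hc) hmh.2
    exact (ENNReal.ofReal_lt_ofReal_iff (pow_pos hR0 m)).mpr (pow_lt_pow_right₀ hR hkm)

lemma mem_AAset_iff {W : ℝ → Ω → ℝ} {x R : ℝ} {k : ℕ} {ω : Ω} :
    ω ∈ AAset W x R k ↔ ∀ j ≤ k, ω ∈ goodSet W x R j := by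
  simp [AAset, Set.mem_iInter]


lemma natFilt_measurableSet {W : ℝ → Ω → ℝ} {t s : ℝ} (hs0 : 0 ≤ s) (hst : s ≤ t)
    {B : Set ℝ} (hB : MeasurableSet B) :
    MeasurableSet[natFilt W t] (W s ⁻¹' B) := by
  have h : MeasurableSpace.comap (W s) inferInstance ≤ natFilt W t :=
    le_biSup (fun u => MeasurableSpace.comap (W u) inferInstance) (Set.mem_Icc.mpr ⟨hs0, hst⟩)
  exact h _ ⟨B, hB, rfl⟩

lemma processSigma_measurableSet {W : ℝ → Ω → ℝ} {s : ℝ} (hs0 : 0 ≤ s)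
    {B : Set ℝ} (hB : MeasurableSet B) :
    MeasurableSet[processSigma W] (W s ⁻¹' B) := by
  have h : MeasurableSpace.comap (W s) inferInstance ≤ processSigma W :=
    le_biSup (fun u => MeasurableSpace.comap (W u) inferInstance) (Set.mem_Ici.mpr hs0)
  exact h _ ⟨B, hB, rfl⟩

lemma measurable_processSigma_coord {W : ℝ → Ω → ℝ} {s : ℝ} (hs0 : 0 ≤ s) :
    Measurable[processSigma W] (W s) :=
  fun _ hB => processSigma_measurableSet hs0 hB

lemma goodSet_eq (W : ℝ → Ω → ℝ) (x R : ℝ) (k : ℕ) :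
    goodSet W x R k = W (R ^ k) ⁻¹' Set.Ico (-x) (bdry R k - x) := by
  ext ω
  simp only [goodSet, Set.mem_setOf_eq, Set.mem_preimage, Set.mem_Ico]
  constructor
  · rintro ⟨h1, h2⟩; constructor <;> linarith
  · rintro ⟨h1, h2⟩; constructor <;> linarith

lemma trigSet_eq (W : ℝ → Ω → ℝ) (x R : ℝ) (k : ℕ) :
    trigSet W x R k = W (R ^ k) ⁻¹' Set.Ici (bdry R k - x) := by
  ext ω
  simp only [trigSet, Set.mem_setOf_eq, Set.mem_preimage, Set.mem_Ici]
  constructor <;> intro h <;> linarith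

lemma goodSet_mem_natFilt {W : ℝ → Ω → ℝ} {x R : ℝ} {k : ℕ} {t : ℝ}
    (hR1 : 1 ≤ R) (hkt : R ^ k ≤ t) :
    MeasurableSet[natFilt W t] (goodSet W x R k) := by
  rw [goodSet_eq]
  exact natFilt_measurableSet (pow_nonneg (by linarith) k) hkt measurableSet_Ico

lemma trigSet_mem_natFilt {W : ℝ → Ω → ℝ} {x R : ℝ} {k : ℕ} {t : ℝ}
    (hR1 : 1 ≤ R) (hkt : R ^ k ≤ t) :
    MeasurableSet[natFilt W t] (trigSet W x R k) := by
  rw [trigSet_eq]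
  exact natFilt_measurableSet (pow_nonneg (by linarith) k) hkt measurableSet_Ici

lemma AAset_mem_natFilt {W : ℝ → Ω → ℝ} {x R : ℝ} {k : ℕ} {t : ℝ}
    (hR1 : 1 ≤ R) (hkt : R ^ k ≤ t) :
    MeasurableSet[natFilt W t] (AAset W x R k) := by
  refine MeasurableSet.biInter (Set.to_countable _) fun j hj => ?_
  exact goodSet_mem_natFilt hR1 (le_trans (pow_le_pow_right₀ hR1 hj) hkt)

lemma hitSet_mem_natFilt {W : ℝ → Ω → ℝ} {x R : ℝ} {k : ℕ} {t : ℝ}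
    (hR1 : 1 ≤ R) (hkt : R ^ k ≤ t) :
    MeasurableSet[natFilt W t] (hitSet W x R k) := by
  refine MeasurableSet.inter ?_ (trigSet_mem_natFilt hR1 hkt)
  refine MeasurableSet.biInter (Set.to_countable _) fun j hj => ?_
  refine MeasurableSet.compl ?_
  exact trigSet_mem_natFilt hR1
    (le_trans (pow_le_pow_right₀ hR1 (Set.mem_Ico.mp hj).2.le) hkt)

lemma goodSet_mem_processSigma {W : ℝ → Ω → ℝ} {x R : ℝ} {k : ℕ} (hR0 : 0 ≤ R) :
    MeasurableSet[processSigma W] (goodSet W x R k) := by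
  rw [goodSet_eq]
  exact processSigma_measurableSet (pow_nonneg hR0 k) measurableSet_Ico

lemma trigSet_mem_processSigma {W : ℝ → Ω → ℝ} {x R : ℝ} {k : ℕ} (hR0 : 0 ≤ R) :
    MeasurableSet[processSigma W] (trigSet W x R k) := by
  rw [trigSet_eq]
  exact processSigma_measurableSet (pow_nonneg hR0 k) measurableSet_Ici

lemma AAset_mem_processSigma {W : ℝ → Ω → ℝ} {x R : ℝ} {k : ℕ} (hR0 : 0 ≤ R) :
    MeasurableSet[processSigma W] (AAset W x R k) :=
  MeasurableSet.biInter (Set.to_countable _) fun _ _ => goodSet_mem_processSigma hR0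

lemma measurableSet_goodSet {W : ℝ → Ω → ℝ} (hWm : ∀ u, Measurable (W u))
    (x R : ℝ) (k : ℕ) : MeasurableSet (goodSet W x R k) := by
  rw [goodSet_eq]; exact hWm _ measurableSet_Ico

lemma measurableSet_trigSet {W : ℝ → Ω → ℝ} (hWm : ∀ u, Measurable (W u))
    (x R : ℝ) (k : ℕ) : MeasurableSet (trigSet W x R k) := by
  rw [trigSet_eq]; exact hWm _ measurableSet_Ici

lemma measurableSet_AAset {W : ℝ → Ω → ℝ} (hWm : ∀ u, Measurable (W u))
    (x R : ℝ) (k : ℕ) : MeasurableSet (AAset W x R k) :=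
  MeasurableSet.biInter (Set.to_countable _) fun _ _ => measurableSet_goodSet hWm x R _

lemma isStopTime_myTau {W : ℝ → Ω → ℝ} {x R : ℝ} (hR : 4 ≤ R) :
    IsStopTime W (myTau W x R) := by
  intro t ht
  have hR1 : (1:ℝ) ≤ R := by linarith
  have hset : {ω | myTau W x R ω ≤ ENNReal.ofReal t}
      = ⋃ k : ℕ, (if 1 ≤ k ∧ R ^ k ≤ t then hitSet W x R k else ∅) := by
    ext ω
    simp only [Set.mem_setOf_eq, Set.mem_iUnion]
    constructor
    · intro hle
      rcases myTau_cases W x R ω with h | ⟨k, hk1, hkh, hkv⟩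
      · rw [h] at hle
        exact absurd (top_le_iff.mp hle) ENNReal.ofReal_ne_top
      · refine ⟨k, ?_⟩
        have hkt : R ^ k ≤ t := by
          rw [hkv] at hle
          exact (ENNReal.ofReal_le_ofReal_iff ht).mp hle
        rw [if_pos ⟨hk1, hkt⟩]; exact hkh
    · rintro ⟨k, hk⟩
      by_cases h : 1 ≤ k ∧ R ^ k ≤ t
      · rw [if_pos h] at hk
        rw [myTau_eq_of_hitSet h.1 hk]
        exact ENNReal.ofReal_le_ofReal h.2
      · rw [if_neg h] at hk; exact absurd hk (Set.notMem_empty ω)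
  rw [hset]
  refine MeasurableSet.iUnion fun k => ?_
  split_ifs with h
  · exact hitSet_mem_natFilt hR1 h.2
  · exact @MeasurableSet.empty _ (natFilt W t)

lemma sqrtR_ge_two {R : ℝ} (hR : 4 ≤ R) : 2 ≤ Real.sqrt R := by
  have h := Real.sqrt_le_sqrt hR
  rwa [show (4:ℝ) = 2^2 by norm_num, Real.sqrt_sq (by norm_num : (0:ℝ) ≤ 2)] at h

lemma key_ineq1 {R : ℝ} (hR : 4 ≤ R) :
    (Real.sqrt 3)⁻¹ * Real.sqrt (R - 1) ≤ Real.sqrt R - 1 := by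
  have h3 : (0:ℝ) < Real.sqrt 3 := Real.sqrt_pos.mpr (by norm_num)
  have h3sq : Real.sqrt 3 ^ 2 = 3 := Real.sq_sqrt (by norm_num)
  have hs2 : 2 ≤ Real.sqrt R := sqrtR_ge_two hR
  have hRsq : Real.sqrt R ^ 2 = R := Real.sq_sqrt (by linarith)
  have h1 : R - 1 ≤ (Real.sqrt 3 * (Real.sqrt R - 1)) ^ 2 := by nlinarith
  have h2 : Real.sqrt (R - 1) ≤ Real.sqrt 3 * (Real.sqrt R - 1) := by
    calc Real.sqrt (R - 1) ≤ Real.sqrt ((Real.sqrt 3 * (Real.sqrt R - 1)) ^ 2) :=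
          Real.sqrt_le_sqrt h1
      _ = Real.sqrt 3 * (Real.sqrt R - 1) := Real.sqrt_sq (by nlinarith)
  calc (Real.sqrt 3)⁻¹ * Real.sqrt (R - 1)
      ≤ (Real.sqrt 3)⁻¹ * (Real.sqrt 3 * (Real.sqrt R - 1)) :=
        mul_le_mul_of_nonneg_left h2 (by positivity)
    _ = Real.sqrt R - 1 := by field_simp

lemma key_ineq2 {R : ℝ} (hR : 4 ≤ R) (k : ℕ) :
    bdry R (k + 1) ≤ Real.sqrt 2 * Real.sqrt (R ^ (k + 1) - R ^ k) := by
  have hR0 : (0:ℝ) < R := by linarith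
  have hp : (0:ℝ) < R ^ k := pow_pos hR0 k
  have hps : R ^ (k + 1) = R ^ k * R := pow_succ R k
  have h1 : R ^ (k + 1) ≤ 2 * (R ^ (k + 1) - R ^ k) := by nlinarith
  calc bdry R (k + 1) = Real.sqrt (R ^ (k + 1)) := rfl
    _ ≤ Real.sqrt (2 * (R ^ (k + 1) - R ^ k)) := Real.sqrt_le_sqrt h1
    _ = Real.sqrt 2 * Real.sqrt (R ^ (k + 1) - R ^ k) := Real.sqrt_mul (by norm_num) _

lemma sd_eq {R : ℝ} (hR1 : 1 ≤ R) (k : ℕ) :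
    Real.sqrt (R ^ (k + 1) - R ^ k) = bdry R k * Real.sqrt (R - 1) := by
  have h : R ^ (k + 1) - R ^ k = R ^ k * (R - 1) := by rw [pow_succ]; ring
  rw [h, Real.sqrt_mul (pow_nonneg (by linarith) k)]
  rfl

/-! ### Gaussian facts -/

lemma std_gauss_pos {s : Set ℝ} (hs : 0 < MeasureTheory.volume s) :
    0 < gaussianReal 0 1 s := by
  rcases eq_or_ne (gaussianReal 0 1 s) 0 with h | h
  · exact absurd (gaussianReal_absolutelyContinuous' 0 one_ne_zero h) hs.ne'
  · exact pos_iff_ne_zero.mpr h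

lemma map_incr_set (P : Measure Ω) (X : Ω → ℝ)
    (hm : Measurable X) {v : ℝ} (hv : 0 < v)
    (hmap : Measure.map X P = gaussianReal 0 (Real.toNNReal v))
    {S : Set ℝ} (hS : MeasurableSet S) :
    P (X ⁻¹' S) = gaussianReal 0 1 ((fun y => Real.sqrt v * y) ⁻¹' S) := by
  have h1 : P (X ⁻¹' S) = (Measure.map X P) S := (Measure.map_apply hm hS).symm
  rw [h1, hmap]
  have h2 : gaussianReal (0:ℝ) (Real.toNNReal v)
      = Measure.map (fun y => Real.sqrt v * y) (gaussianReal 0 1) := by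
    rw [gaussianReal_map_const_mul (Real.sqrt v)]
    congr 1
    · simp
    · ext
      simp [Real.sq_sqrt hv.le, Real.coe_toNNReal _ hv.le]
  rw [h2, Measure.map_apply (measurable_const_mul _) hS]

lemma preimage_mul_Icc {c a : ℝ} (hc : 0 < c) :
    (fun y => c * y) ⁻¹' Set.Icc 0 (a * c) = Set.Icc 0 a := by
  ext y
  simp only [Set.mem_preimage, Set.mem_Icc]
  constructor
  · rintro ⟨h1, h2⟩
    exact ⟨nonneg_of_mul_nonneg_right h1 hc, by nlinarith⟩
  · rintro ⟨h1, h2⟩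
    exact ⟨mul_nonneg hc.le h1, by nlinarith⟩

lemma preimage_mul_Ici {c a : ℝ} (hc : 0 < c) :
    (fun y => c * y) ⁻¹' Set.Ici (a * c) = Set.Ici a := by
  ext y
  simp only [Set.mem_preimage, Set.mem_Ici]
  constructor
  · intro h; nlinarith
  · intro h; nlinarith

lemma prob_incr_mem {P : Measure Ω} {W : ℝ → Ω → ℝ} (hW : IsBM P W) {s t : ℝ}
    (hs : 0 ≤ s) (hst : s < t) {S : Set ℝ} (hS : MeasurableSet S) :
    P {ω | W t ω - W s ω ∈ S}
      = gaussianReal 0 1 ((fun y => Real.sqrt (t - s) * y) ⁻¹' S) :=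
  map_incr_set P _ ((hW.meas t).sub (hW.meas s)) (sub_pos.mpr hst)
    (hW.incr s t hs hst.le) hS

/-! ### constants -/

def qE : ℝ≥0∞ := gaussianReal 0 1 (Set.Icc 0 (Real.sqrt 3)⁻¹)

def rE : ℝ≥0∞ := gaussianReal 0 1 (Set.Ici (Real.sqrt 2))

def pE (x : ℝ) : ℝ≥0∞ := gaussianReal 0 1 (Set.Ico (-x) (1 - x))

lemma qE_pos : 0 < qE := by
  refine std_gauss_pos ?_
  rw [Real.volume_Icc]
  simp only [sub_zero]
  rw [ENNReal.ofReal_pos]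
  positivity

lemma rE_pos : 0 < rE := by
  refine std_gauss_pos ?_
  rw [Real.volume_Ici]
  exact ENNReal.zero_lt_top

lemma pE_pos (x : ℝ) : 0 < pE x := by
  refine std_gauss_pos ?_
  rw [Real.volume_Ico]
  rw [show 1 - x - (-x) = 1 by ring]
  norm_num

lemma qE_le_one : qE ≤ 1 := prob_le_one

lemma qE_ne_top : qE ≠ ⊤ := measure_ne_top _ _

lemma rE_ne_top : rE ≠ ⊤ := measure_ne_top _ _

lemma pE_ne_top (x : ℝ) : pE x ≠ ⊤ := measure_ne_top _ _

/-! ### probability bounds -/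

lemma prob_AA_zero {P : Measure Ω} {W : ℝ → Ω → ℝ} (hW : IsBM P W) (x R : ℝ) :
    P (AAset W x R 0) = pE x := by
  have h0 : AAset W x R 0 = goodSet W x R 0 := by
    ext ω
    simp [AAset, Nat.le_zero]
  have hgs : goodSet W x R 0 = {ω | W 1 ω - W 0 ω ∈ Set.Ico (-x) (1 - x)} := by
    ext ω
    have hi := hW.init ω
    simp only [goodSet, Set.mem_setOf_eq, Set.mem_Ico, pow_zero, bdry]
    rw [hi]
    constructor
    · rintro ⟨h1, h2⟩
      rw [Real.sqrt_one] at h2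
      constructor <;> linarith
    · rintro ⟨h1, h2⟩
      rw [Real.sqrt_one]
      constructor <;> linarith
  rw [h0, hgs, prob_incr_mem hW le_rfl one_pos measurableSet_Ico]
  rw [show (1:ℝ) - 0 = 1 by ring, Real.sqrt_one, pE]
  congr 1
  ext y
  simp

lemma prob_AA_step {P : Measure Ω} {W : ℝ → Ω → ℝ} (hW : IsBM P W) (x : ℝ) {R : ℝ}
    (hR : 4 ≤ R) (k : ℕ) :
    qE * P (AAset W x R k) ≤ P (AAset W x R (k + 1)) := by
  have hR0 : (0:ℝ) < R := by linarith
  have hR1 : (1:ℝ) ≤ R := by linarith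
  have hst : R ^ k < R ^ (k + 1) := pow_lt_pow_right₀ (by linarith) (Nat.lt_succ_self k)
  set d := Real.sqrt (R ^ (k + 1) - R ^ k) with hd
  have hdpos : 0 < d := Real.sqrt_pos.mpr (by linarith)
  set U := {ω | W (R ^ (k + 1)) ω - W (R ^ k) ω ∈ Set.Icc 0 ((Real.sqrt 3)⁻¹ * d)} with hU
  have hPU : P U = qE := by
    rw [hU, prob_incr_mem hW (pow_nonneg hR0.le k) hst measurableSet_Icc, ← hd,
      preimage_mul_Icc hdpos]
    rfl
  have hind := hW.indep_incr (R ^ k) (R ^ (k + 1)) (pow_nonneg hR0.le k) hst.le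
  have hUm : MeasurableSet[MeasurableSpace.comap
      (fun ω => W (R ^ (k + 1)) ω - W (R ^ k) ω) inferInstance] U :=
    ⟨Set.Icc 0 _, measurableSet_Icc, rfl⟩
  have hAm : MeasurableSet[natFilt W (R ^ k)] (AAset W x R k) := AAset_mem_natFilt hR1 le_rfl
  have hmul : P (U ∩ AAset W x R k) = P U * P (AAset W x R k) :=
    (hind.indepSet_of_measurableSet hUm hAm).measure_inter_eq_mul
  have hsub : U ∩ AAset W x R k ⊆ AAset W x R (k + 1) := by
    rintro ω ⟨hUω, hAω⟩
    rw [mem_AAset_iff] at hAω ⊢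
    intro j hj
    by_cases hjk : j ≤ k
    · exact hAω j hjk
    · have hj1 : j = k + 1 := by omega
      subst hj1
      have hgood := hAω k le_rfl
      have hDelta : W (R ^ (k + 1)) ω - W (R ^ k) ω ∈ Set.Icc 0 ((Real.sqrt 3)⁻¹ * d) := hUω
      rcases hDelta with ⟨hD0, hD1⟩
      have hdb : d = bdry R k * Real.sqrt (R - 1) := sd_eq hR1 k
      have hkey : (Real.sqrt 3)⁻¹ * d ≤ (Real.sqrt R - 1) * bdry R k := by
        rw [hdb]
        have := mul_le_mul_of_nonneg_right (key_ineq1 hR) (bdry_nonneg R k)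
        calc (Real.sqrt 3)⁻¹ * (bdry R k * Real.sqrt (R - 1))
            = (Real.sqrt 3)⁻¹ * Real.sqrt (R - 1) * bdry R k := by ring
          _ ≤ (Real.sqrt R - 1) * bdry R k := this
      have hbs : bdry R (k + 1) = Real.sqrt R * bdry R k := bdry_succ hR0.le k
      constructor
      · have := hgood.1
        linarith
      · have := hgood.2
        rw [hbs]
        nlinarith
  calc qE * P (AAset W x R k) = P U * P (AAset W x R k) := by rw [hPU]
    _ = P (U ∩ AAset W x R k) := hmul.symm
    _ ≤ P (AAset W x R (k + 1)) := measure_mono hsub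

lemma prob_AA_ge {P : Measure Ω} {W : ℝ → Ω → ℝ} (hW : IsBM P W) (x : ℝ) {R : ℝ}
    (hR : 4 ≤ R) (k : ℕ) :
    pE x * qE ^ k ≤ P (AAset W x R k) := by
  induction k with
  | zero => rw [pow_zero, mul_one, prob_AA_zero hW x R]
  | succ n ih =>
      calc pE x * qE ^ (n + 1) = qE * (pE x * qE ^ n) := by ring
        _ ≤ qE * P (AAset W x R n) := mul_le_mul_right ih _
        _ ≤ P (AAset W x R (n + 1)) := prob_AA_step hW x hR n

lemma prob_hit_ge {P : Measure Ω} {W : ℝ → Ω → ℝ} (hW : IsBM P W) (x : ℝ) {R : ℝ}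
    (hR : 4 ≤ R) (k : ℕ) :
    rE * (pE x * qE ^ k) ≤ P (hitSet W x R (k + 1)) := by
  have hR0 : (0:ℝ) < R := by linarith
  have hR1 : (1:ℝ) ≤ R := by linarith
  have hst : R ^ k < R ^ (k + 1) := pow_lt_pow_right₀ (by linarith) (Nat.lt_succ_self k)
  set d := Real.sqrt (R ^ (k + 1) - R ^ k) with hd
  have hdpos : 0 < d := Real.sqrt_pos.mpr (by linarith)
  set V := {ω | W (R ^ (k + 1)) ω - W (R ^ k) ω ∈ Set.Ici (Real.sqrt 2 * d)} with hV
  have hPV : P V = rE := by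
    rw [hV, prob_incr_mem hW (pow_nonneg hR0.le k) hst measurableSet_Ici, ← hd,
      preimage_mul_Ici hdpos]
    rfl
  have hind := hW.indep_incr (R ^ k) (R ^ (k + 1)) (pow_nonneg hR0.le k) hst.le
  have hVm : MeasurableSet[MeasurableSpace.comap
      (fun ω => W (R ^ (k + 1)) ω - W (R ^ k) ω) inferInstance] V :=
    ⟨Set.Ici _, measurableSet_Ici, rfl⟩
  have hAm : MeasurableSet[natFilt W (R ^ k)] (AAset W x R k) := AAset_mem_natFilt hR1 le_rfl
  have hmul : P (V ∩ AAset W x R k) = P V * P (AAset W x R k) :=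
    (hind.indepSet_of_measurableSet hVm hAm).measure_inter_eq_mul
  have hsub : V ∩ AAset W x R k ⊆ hitSet W x R (k + 1) := by
    rintro ω ⟨hVω, hAω⟩
    rw [mem_AAset_iff] at hAω
    refine hitSet_of_good hAω ?_
    have hD : Real.sqrt 2 * d ≤ W (R ^ (k + 1)) ω - W (R ^ k) ω := hVω
    have hgood := hAω k le_rfl
    have hkey : bdry R (k + 1) ≤ Real.sqrt 2 * d := key_ineq2 hR k
    have : bdry R (k + 1) ≤ x + W (R ^ (k + 1)) ω := by
      have h1 := hgood.1
      linarith
    exact this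
  calc rE * (pE x * qE ^ k) ≤ P V * P (AAset W x R k) := by
        rw [hPV]
        exact mul_le_mul_right (prob_AA_ge hW x hR k) _
    _ = P (V ∩ AAset W x R k) := hmul.symm
    _ ≤ P (hitSet W x R (k + 1)) := measure_mono hsub

lemma processSigma_le {W : ℝ → Ω → ℝ} (hWm : ∀ u, Measurable (W u)) :
    processSigma W ≤ ‹MeasurableSpace Ω› := by
  refine iSup₂_le fun s _ => ?_
  exact measurable_iff_comap_le.mp (hWm s)

lemma hitSet_mem_processSigma {W : ℝ → Ω → ℝ} {x R : ℝ} {k : ℕ} (hR0 : 0 ≤ R) :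
    MeasurableSet[processSigma W] (hitSet W x R k) := by
  refine MeasurableSet.inter ?_ (trigSet_mem_processSigma hR0)
  exact MeasurableSet.biInter (Set.to_countable _)
    fun _ _ => (trigSet_mem_processSigma hR0).compl

lemma payoff_nonneg {W₁ W₂ : ℝ → Ω → ℝ} {f : ℝ → ℝ} (hA1 : A1 f)
    (x₁ x₂ : ℝ) {R : ℝ} (hR0 : 0 < R) (ω : Ω) :
    0 ≤ payoff f x₁ W₁ (myTau W₁ x₁ R) (myTau W₂ x₂ R) ω := by
  rcases myTau_cases W₁ x₁ R ω with h | ⟨k, hk1, hkh, hkv⟩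
  · rw [payoff, h]
    rw [if_neg (not_top_lt), if_neg (fun hc => hc.2 rfl)]
    simp
  · have hv : stopVal W₁ (myTau W₁ x₁ R) ω = W₁ (R ^ k) ω := by
      rw [stopVal, hkv, ENNReal.toReal_ofReal (pow_nonneg hR0.le k)]
    have hge : 0 ≤ x₁ + W₁ (R ^ k) ω := le_trans (bdry_nonneg R k) hkh.2
    have hf0 : 0 ≤ f (x₁ + stopVal W₁ (myTau W₁ x₁ R) ω) := by
      rw [hv]; exact hA1.2 _ hge
    refine mul_nonneg hf0 ?_
    have h1 : (0:ℝ) ≤ (if myTau W₁ x₁ R ω < myTau W₂ x₂ R ω then (1:ℝ) else 0) := by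
      split_ifs <;> norm_num
    have h2 : (0:ℝ) ≤ (if myTau W₁ x₁ R ω = myTau W₂ x₂ R ω ∧ myTau W₁ x₁ R ω ≠ ⊤
        then (1:ℝ)/2 else 0) := by
      split_ifs <;> norm_num
    linarith

lemma adm_myTau {P : Measure Ω} {W : ℝ → Ω → ℝ}
    [IsProbabilityMeasure P] (hW : IsBM P W) {f : ℝ → ℝ} (hA1 : A1 f)
    (x : ℝ) {R : ℝ} (hR : 4 ≤ R) :
    Adm P f x W (myTau W x R) := by
  have hR0 : (0:ℝ) < R := by linarith
  refine ⟨isStopTime_myTau hR, Or.inr ?_⟩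
  have hb : ∀ ω, ENNReal.ofReal (-(f (x + stopVal W (myTau W x R) ω)))
      ≤ ENNReal.ofReal |f x| := by
    intro ω
    rcases myTau_cases W x R ω with h | ⟨k, hk1, hkh, hkv⟩
    · have hsv : stopVal W (myTau W x R) ω = W 0 ω := by
        rw [stopVal, h, ENNReal.toReal_top]
      rw [hsv, hW.init, add_zero]
      exact ENNReal.ofReal_le_ofReal (neg_le_abs _)
    · have hsv : stopVal W (myTau W x R) ω = W (R ^ k) ω := by
        rw [stopVal, hkv, ENNReal.toReal_ofReal (pow_nonneg hR0.le k)]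
      have h0 : 0 ≤ x + W (R ^ k) ω := le_trans (bdry_nonneg R k) hkh.2
      have hf0 := hA1.2 _ h0
      rw [hsv, ENNReal.ofReal_eq_zero.mpr (neg_nonpos.mpr hf0)]
      exact zero_le
  have hle : (∫⁻ ω, ENNReal.ofReal (-(f (x + stopVal W (myTau W x R) ω))) ∂P)
      ≤ ENNReal.ofReal |f x| := by
    calc (∫⁻ ω, ENNReal.ofReal (-(f (x + stopVal W (myTau W x R) ω))) ∂P)
        ≤ ∫⁻ _, ENNReal.ofReal |f x| ∂P := lintegral_mono hb
      _ = ENNReal.ofReal |f x| := by rw [lintegral_const, measure_univ, mul_one]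
  exact ne_top_of_le_ne_top ENNReal.ofReal_ne_top hle

lemma bdry_rpow {R : ℝ} (hR0 : 0 ≤ R) (γ : ℝ) (m : ℕ) :
    bdry R m ^ γ = (Real.sqrt R ^ γ) ^ m := by
  rw [bdry_eq_pow hR0, ← Real.rpow_natCast (Real.sqrt R) m,
    ← Real.rpow_mul (Real.sqrt_nonneg R), mul_comm,
    Real.rpow_mul (Real.sqrt_nonneg R), Real.rpow_natCast]

lemma J_eq_top {P : Measure Ω} {W₁ W₂ : ℝ → Ω → ℝ} (hs : Setup P W₁ W₂)
    {f : ℝ → ℝ} (hA1 : A1 f) {γ C M : ℝ} (hC : 0 < C)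
    (hfM : ∀ y, M ≤ y → C * y ^ γ ≤ f y) (hγ : 0 ≤ γ)
    {R : ℝ} (hR : 4 ≤ R)
    (hRq : 1 ≤ Real.sqrt R ^ γ * qE.toReal ^ 2)
    (x₁ x₂ : ℝ) :
    J P f x₁ W₁ (myTau W₁ x₁ R) (myTau W₂ x₂ R) = ⊤ := by
  haveI := hs.prob
  have hR0 : (0:ℝ) < R := by linarith
  have hR1 : (1:ℝ) < R := by linarith
  set τ₁ := myTau W₁ x₁ R with hτ₁
  set τ₂ := myTau W₂ x₂ R with hτ₂
  set g : Ω → ℝ := payoff f x₁ W₁ τ₁ τ₂ with hg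
  have hpay : ∀ ω, 0 ≤ g ω := payoff_nonneg hA1 x₁ x₂ hR0
  -- negative part is zero
  have hneg : (∫⁻ ω, ENNReal.ofReal (-g ω) ∂P) = 0 := by
    have hz : ∀ ω, ENNReal.ofReal (-g ω) = 0 :=
      fun ω => ENNReal.ofReal_eq_zero.mpr (neg_nonpos.mpr (hpay ω))
    simp only [hz, lintegral_zero]
  -- positive part is infinite
  obtain ⟨k₀, hk₀⟩ := pow_unbounded_of_one_lt M (one_lt_two (α := ℝ))
  have hbdryM : ∀ m, k₀ ≤ m → M ≤ bdry R m := by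
    intro m hm
    have h2 : (2:ℝ) ^ k₀ ≤ 2 ^ m := pow_le_pow_right₀ one_le_two hm
    have h3 : (2:ℝ) ^ m ≤ Real.sqrt R ^ m :=
      pow_le_pow_left₀ (by norm_num) (sqrtR_ge_two hR) m
    rw [bdry_eq_pow hR0.le]
    linarith
  set E : ℕ → Set Ω := fun k => hitSet W₁ x₁ R (k + 1) ∩ AAset W₂ x₂ R (k + 1) with hE
  have hEmeas : ∀ k, MeasurableSet (E k) := by
    intro k
    exact ((processSigma_le hs.bm₁.meas) _ (hitSet_mem_processSigma hR0.le)).inter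
      ((processSigma_le hs.bm₂.meas) _ (AAset_mem_processSigma hR0.le))
  have hτval : ∀ k (ω : Ω), ω ∈ E k → τ₁ ω = ENNReal.ofReal (R ^ (k + 1)) :=
    fun k ω hω => myTau_eq_of_hitSet (Nat.succ_le_succ (Nat.zero_le k)) hω.1
  have hEdisj : Pairwise (Function.onFun Disjoint fun k => E (k + k₀)) := by
    intro a b hab
    refine Set.disjoint_left.mpr fun ω hωa hωb => ?_
    have h1 := hτval _ ω hωa
    have h2 := hτval _ ω hωb
    rw [h1] at h2
    have h3 : R ^ (a + k₀ + 1) = R ^ (b + k₀ + 1) :=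
      (ENNReal.ofReal_eq_ofReal_iff (pow_nonneg hR0.le _) (pow_nonneg hR0.le _)).mp h2
    have h4 := (pow_right_strictMono₀ hR1).injective h3
    omega
  -- real constants
  set qT := qE.toReal with hqT
  set rT := rE.toReal with hrT
  set p1T := (pE x₁).toReal with hp1T
  set p2T := (pE x₂).toReal with hp2T
  have hqT0 : 0 < qT := ENNReal.toReal_pos qE_pos.ne' qE_ne_top
  have hqT1 : qT ≤ 1 := by
    rw [hqT]
    exact ENNReal.toReal_le_of_le_ofReal one_pos.le (by simpa using qE_le_one)
  have hrT0 : 0 < rT := ENNReal.toReal_pos rE_pos.ne' rE_ne_top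
  have hp1T0 : 0 < p1T := ENNReal.toReal_pos (pE_pos x₁).ne' (pE_ne_top x₁)
  have hp2T0 : 0 < p2T := ENNReal.toReal_pos (pE_pos x₂).ne' (pE_ne_top x₂)
  set ε : ℝ := C * rT * p1T * p2T with hε
  have hε0 : 0 < ε := by positivity
  -- per-term bound
  have hterm : ∀ k, k₀ ≤ k →
      ENNReal.ofReal ε ≤ ∫⁻ ω in E k, ENNReal.ofReal (g ω) ∂P := by
    intro k hk
    have hpoint : ∀ ω ∈ E k, ENNReal.ofReal (C * bdry R (k + 1) ^ γ)
        ≤ ENNReal.ofReal (g ω) := by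
      intro ω hω
      apply ENNReal.ofReal_le_ofReal
      have hτ1 : τ₁ ω = ENNReal.ofReal (R ^ (k + 1)) := hτval k ω hω
      have hτ2 : ENNReal.ofReal (R ^ (k + 1)) < τ₂ ω := myTau_gt_of_AA hR1 hω.2
      have hlt : τ₁ ω < τ₂ ω := by rw [hτ1]; exact hτ2
      have hsv : x₁ + stopVal W₁ τ₁ ω = x₁ + W₁ (R ^ (k + 1)) ω := by
        rw [stopVal, hτ1, ENNReal.toReal_ofReal (pow_nonneg hR0.le _)]
      have hY : bdry R (k + 1) ≤ x₁ + W₁ (R ^ (k + 1)) ω := hω.1.2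
      have hfY : C * bdry R (k + 1) ^ γ ≤ f (x₁ + stopVal W₁ τ₁ ω) := by
        rw [hsv]
        have hM : M ≤ x₁ + W₁ (R ^ (k + 1)) ω :=
          le_trans (hbdryM (k + 1) (le_trans hk (Nat.le_succ k))) hY
        have h1 := hfM _ hM
        have h2 : bdry R (k + 1) ^ γ ≤ (x₁ + W₁ (R ^ (k + 1)) ω) ^ γ :=
          Real.rpow_le_rpow (bdry_nonneg _ _) hY hγ
        calc C * bdry R (k + 1) ^ γ ≤ C * (x₁ + W₁ (R ^ (k + 1)) ω) ^ γ :=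
              mul_le_mul_of_nonneg_left h2 hC.le
          _ ≤ f (x₁ + W₁ (R ^ (k + 1)) ω) := h1
      rw [hg, payoff, if_pos hlt, if_neg (fun hc => (ne_of_lt hlt) hc.1)]
      rw [add_zero, mul_one]
      exact hfY
    have hprobE : ENNReal.ofReal (rT * (p1T * qT ^ k) * (p2T * qT ^ (k + 1)))
        ≤ P (E k) := by
      have hPmul : P (E k) = P (hitSet W₁ x₁ R (k + 1)) * P (AAset W₂ x₂ R (k + 1)) :=
        ((hs.indep.indepSet_of_measurableSet (hitSet_mem_processSigma hR0.le)
          (AAset_mem_processSigma hR0.le))).measure_inter_eq_mul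
      have hlow : rE * (pE x₁ * qE ^ k) * (pE x₂ * qE ^ (k + 1))
          ≤ P (hitSet W₁ x₁ R (k + 1)) * P (AAset W₂ x₂ R (k + 1)) :=
        mul_le_mul' (prob_hit_ge hs.bm₁ x₁ hR k) (prob_AA_ge hs.bm₂ x₂ hR (k + 1))
      have heq : ENNReal.ofReal (rT * (p1T * qT ^ k) * (p2T * qT ^ (k + 1)))
          = rE * (pE x₁ * qE ^ k) * (pE x₂ * qE ^ (k + 1)) := by
        rw [ENNReal.ofReal_mul (by positivity), ENNReal.ofReal_mul (by positivity),
          ENNReal.ofReal_mul (by positivity), ENNReal.ofReal_mul (by positivity),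
          ENNReal.ofReal_pow (by positivity), ENNReal.ofReal_pow (by positivity)]
        rw [hrT, hp1T, hp2T, hqT,
          ENNReal.ofReal_toReal rE_ne_top, ENNReal.ofReal_toReal (pE_ne_top x₁),
          ENNReal.ofReal_toReal (pE_ne_top x₂), ENNReal.ofReal_toReal qE_ne_top]
      rw [heq, hPmul]
      exact hlow
    have hX : 1 ≤ bdry R (k + 1) ^ γ * (qT ^ k * qT ^ (k + 1)) := by
      have h1 : qT ^ k * qT ^ (k + 1) = qT ^ (2 * k + 1) := by
        rw [← pow_add]; ring_nf
      have h2 : qT ^ (2 * k + 2) ≤ qT ^ (2 * k + 1) :=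
        pow_le_pow_of_le_one hqT0.le hqT1 (by omega)
      have h3 : (1:ℝ) ≤ (Real.sqrt R ^ γ * qT ^ 2) ^ (k + 1) := one_le_pow₀ hRq
      have h4 : (Real.sqrt R ^ γ * qT ^ 2) ^ (k + 1)
          = (Real.sqrt R ^ γ) ^ (k + 1) * qT ^ (2 * k + 2) := by
        rw [mul_pow, ← pow_mul]
        ring_nf
      have h5 : (0:ℝ) ≤ (Real.sqrt R ^ γ) ^ (k + 1) := by positivity
      rw [bdry_rpow hR0.le, h1]
      nlinarith
    calc ENNReal.ofReal ε
        ≤ ENNReal.ofReal (C * bdry R (k + 1) ^ γ)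
            * ENNReal.ofReal (rT * (p1T * qT ^ k) * (p2T * qT ^ (k + 1))) := by
          rw [← ENNReal.ofReal_mul (mul_nonneg hC.le (Real.rpow_nonneg (bdry_nonneg R (k + 1)) γ))]
          apply ENNReal.ofReal_le_ofReal
          calc ε = (C * rT * p1T * p2T) * 1 := by rw [hε, mul_one]
            _ ≤ (C * rT * p1T * p2T) * (bdry R (k + 1) ^ γ * (qT ^ k * qT ^ (k + 1))) :=
                mul_le_mul_of_nonneg_left hX (by positivity)
            _ = C * bdry R (k + 1) ^ γ * (rT * (p1T * qT ^ k) * (p2T * qT ^ (k + 1))) := by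
                ring
      _ ≤ ENNReal.ofReal (C * bdry R (k + 1) ^ γ) * P (E k) :=
          mul_le_mul_right hprobE _
      _ = ∫⁻ _ in E k, ENNReal.ofReal (C * bdry R (k + 1) ^ γ) ∂P := by
          rw [setLIntegral_const]
      _ ≤ ∫⁻ ω in E k, ENNReal.ofReal (g ω) ∂P := by
          refine lintegral_mono_ae ((ae_restrict_iff' (hEmeas k)).mpr (ae_of_all _ ?_))
          exact hpoint
  have hpos : (∫⁻ ω, ENNReal.ofReal (g ω) ∂P) = ⊤ := by
    have h1 : (∫⁻ ω in ⋃ k, E (k + k₀), ENNReal.ofReal (g ω) ∂P)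
        ≤ ∫⁻ ω, ENNReal.ofReal (g ω) ∂P := setLIntegral_le_lintegral _ _
    have h2 : (∫⁻ ω in ⋃ k, E (k + k₀), ENNReal.ofReal (g ω) ∂P)
        = ∑' k, ∫⁻ ω in E (k + k₀), ENNReal.ofReal (g ω) ∂P :=
      lintegral_iUnion (fun k => hEmeas (k + k₀)) hEdisj _
    have h3 : (∑' _ : ℕ, ENNReal.ofReal ε)
        ≤ ∑' k, ∫⁻ ω in E (k + k₀), ENNReal.ofReal (g ω) ∂P :=
      ENNReal.tsum_le_tsum fun k => hterm (k + k₀) (Nat.le_add_left k₀ k)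
    have h4 : (∑' _ : ℕ, ENNReal.ofReal ε) = ⊤ :=
      ENNReal.tsum_const_eq_top_of_ne_zero (by
        simp only [ne_eq, ENNReal.ofReal_eq_zero, not_le]
        exact hε0)
    rw [h4] at h3
    exact top_le_iff.mp (le_trans h3 (le_trans (le_of_eq h2.symm) h1))
  rw [J, EE, hpos, hneg]
  simp

end Aux

/-- Theorem 3.1, Part I: under (A1) and (A2) with some exponent `γ > 0`,
for every starting point there exist infinitely many Nash equilibria in which both
players receive infinite expected payoffs. -/
theorem infinitely_many_infinite_payoff_equilibria
    {Ω : Type*} [MeasurableSpace Ω] (P : Measure Ω) (W₁ W₂ : ℝ → Ω → ℝ)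
    (hs : Setup P W₁ W₂) (f : ℝ → ℝ) (hf : Measurable f)
    (hA1 : A1 f) (γ : ℝ) (hγ : 0 < γ) (hA2 : A2 f γ) (x₁ x₂ : ℝ) :
    {p : (Ω → ℝ≥0∞) × (Ω → ℝ≥0∞) | Nash P f x₁ x₂ W₁ W₂ p.1 p.2 ∧
      J P f x₁ W₁ p.1 p.2 = ⊤ ∧ J P f x₂ W₂ p.2 p.1 = ⊤}.Infinite := by
  classical
  haveI := hs.prob
  -- Extract a polynomial lower bound from (A2)
  have hex : ∃ a : ℝ, 0 < a ∧ ∀ᶠ x in atTop, a ≤ f x / x ^ γ := by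
    by_contra hc
    push_neg at hc
    have hle : sSup {a : ℝ | ∀ᶠ x in atTop, a ≤ f x / x ^ γ} ≤ 0 :=
      Real.sSup_le (fun a ha => le_of_not_gt fun h0 => (hc a h0) (ha.mono fun _ hx => not_lt.mpr hx)) le_rfl
    rw [A2, Filter.liminf_eq] at hA2
    exact absurd hA2 (not_lt.mpr hle)
  obtain ⟨C, hC, haev⟩ := hex
  obtain ⟨M₀, hM₀⟩ := Filter.eventually_atTop.mp haev
  set M : ℝ := max M₀ 1 with hM
  have hfM : ∀ y, M ≤ y → C * y ^ γ ≤ f y := by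
    intro y hy
    have hy1 : (1:ℝ) ≤ y := le_trans (le_max_right _ _) hy
    have hy0 : (0:ℝ) < y := lt_of_lt_of_le one_pos hy1
    have hyγ : 0 < y ^ γ := Real.rpow_pos_of_pos hy0 γ
    have h1 : C ≤ f y / y ^ γ := hM₀ y (le_trans (le_max_left _ _) hy)
    have h2 : C * y ^ γ ≤ f y / y ^ γ * y ^ γ :=
      mul_le_mul_of_nonneg_right h1 hyγ.le
    rwa [div_mul_cancel₀ _ hyγ.ne'] at h2
  -- choose the parameters R n
  set qT := qE.toReal with hqT
  have hqT0 : 0 < qT := ENNReal.toReal_pos qE_pos.ne' qE_ne_top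
  set B : ℝ := qT⁻¹ ^ ((2:ℝ)/γ) with hB
  have hB0 : 0 ≤ B := Real.rpow_nonneg (inv_nonneg.mpr hqT0.le) _
  set R0 : ℝ := max 4 (B ^ 2) with hR0def
  set Rn : ℕ → ℝ := fun n => R0 + n with hRn
  have hR4 : ∀ n, 4 ≤ Rn n := fun n =>
    le_trans (le_max_left _ _) (le_add_of_nonneg_right (Nat.cast_nonneg n))
  have hRq : ∀ n, 1 ≤ Real.sqrt (Rn n) ^ γ * qT ^ 2 := by
    intro n
    have h1 : B ^ 2 ≤ Rn n :=
      le_trans (le_max_right _ _) (le_add_of_nonneg_right (Nat.cast_nonneg n))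
    have h2 : B ≤ Real.sqrt (Rn n) := by
      rw [show B = Real.sqrt (B ^ 2) from (Real.sqrt_sq hB0).symm]
      exact Real.sqrt_le_sqrt h1
    have h3 : B ^ γ ≤ Real.sqrt (Rn n) ^ γ := Real.rpow_le_rpow hB0 h2 hγ.le
    have h4 : B ^ γ = (qT ^ 2)⁻¹ := by
      rw [hB, ← Real.rpow_mul (inv_nonneg.mpr hqT0.le), div_mul_cancel₀ _ hγ.ne',
        show ((2:ℝ)) = ((2:ℕ):ℝ) by norm_num, Real.rpow_natCast, inv_pow]
    calc (1:ℝ) = (qT ^ 2)⁻¹ * qT ^ 2 := (inv_mul_cancel₀ (by positivity)).symm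
      _ ≤ Real.sqrt (Rn n) ^ γ * qT ^ 2 := by
          refine mul_le_mul_of_nonneg_right ?_ (by positivity)
          rw [← h4]; exact h3
  -- the family of equilibria
  set F : ℕ → (Ω → ℝ≥0∞) × (Ω → ℝ≥0∞) :=
    fun n => (myTau W₁ x₁ (Rn n), myTau W₂ x₂ (Rn n)) with hF
  have hs' : Setup P W₂ W₁ := ⟨hs.prob, hs.bm₂, hs.bm₁, hs.indep.symm⟩
  have hmem : ∀ n, F n ∈ {p : (Ω → ℝ≥0∞) × (Ω → ℝ≥0∞) |
      Nash P f x₁ x₂ W₁ W₂ p.1 p.2 ∧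
      J P f x₁ W₁ p.1 p.2 = ⊤ ∧ J P f x₂ W₂ p.2 p.1 = ⊤} := by
    intro n
    have hJ1 : J P f x₁ W₁ (F n).1 (F n).2 = ⊤ :=
      J_eq_top hs hA1 hC hfM hγ.le (hR4 n) (hRq n) x₁ x₂
    have hJ2 : J P f x₂ W₂ (F n).2 (F n).1 = ⊤ :=
      J_eq_top hs' hA1 hC hfM hγ.le (hR4 n) (hRq n) x₂ x₁
    refine ⟨⟨adm_myTau hs.bm₁ hA1 x₁ (hR4 n), adm_myTau hs.bm₂ hA1 x₂ (hR4 n),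
      ?_, ?_⟩, hJ1, hJ2⟩
    · intro σ _; rw [hJ1]; exact le_top
    · intro σ _; rw [hJ2]; exact le_top
  -- distinctness
  have hne : ∀ m n : ℕ, m < n → myTau W₁ x₁ (Rn m) ≠ myTau W₁ x₁ (Rn n) := by
    intro m n hmn heq
    have hRm4 : (4:ℝ) ≤ Rn m := hR4 m
    have hRn4 : (4:ℝ) ≤ Rn n := hR4 n
    have hRmn : Rn m < Rn n := by
      rw [hRn]
      exact add_lt_add_right (Nat.cast_lt.mpr hmn) R0
    have hposP : P (hitSet W₁ x₁ (Rn m) 1) ≠ 0 := by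
      have hlow := prob_hit_ge hs.bm₁ x₁ hRm4 0
      have hpos : 0 < rE * (pE x₁ * qE ^ 0) := by
        rw [pow_zero, mul_one]
        exact ENNReal.mul_pos rE_pos.ne' (pE_pos x₁).ne'
      exact fun h0 => absurd (lt_of_lt_of_le hpos hlow)
        (by rw [show (0:ℕ) + 1 = 1 from rfl, h0]; exact lt_irrefl 0)
    obtain ⟨ω, hω⟩ := nonempty_of_measure_ne_zero hposP
    have h1 : myTau W₁ x₁ (Rn m) ω = ENNReal.ofReal (Rn m ^ 1) :=
      myTau_eq_of_hitSet le_rfl hω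
    have h2 : myTau W₁ x₁ (Rn n) ω = ENNReal.ofReal (Rn m ^ 1) := by
      rw [← heq]; exact h1
    rcases myTau_cases W₁ x₁ (Rn n) ω with hc | ⟨k, hk1, _, hkv⟩
    · rw [hc] at h2
      exact absurd h2.symm ENNReal.ofReal_ne_top
    · rw [hkv] at h2
      have h3 : Rn n ^ k = Rn m ^ 1 :=
        (ENNReal.ofReal_eq_ofReal_iff (pow_nonneg (by linarith) k)
          (pow_nonneg (by linarith) 1)).mp h2
      have h4 : Rn n ≤ Rn n ^ k := le_self_pow₀ (by linarith) (by omega)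
      rw [pow_one] at h3
      linarith [h3 ▸ h4]
  refine Set.infinite_of_injective_forall_mem (f := F) ?_ hmem
  intro m n hFeq
  by_contra hmn
  rcases lt_trichotomy m n with h | h | h
  · exact hne m n h (congrArg Prod.fst hFeq)
  · exact hmn h
  · exact hne n m h (congrArg Prod.fst hFeq.symm)


end DynkinGame
end
end

section
/- Let f: ℝ → ℝ satisfy f(x) ≥ 0 for x ≥ 0 and liminf_{x→∞} f(x)/x^γ > 0 for some γ > 0. Let X be a nonnegative random variable and g: [0,∞) → [0,∞) a nonincreasing function such that, for some constants c > 0, t0 > 0 and some β ∈ (0, γ/4), one has P(X > t − 1) ≥ c·t^{−β} and g(t) ≥ c·t^{−β} for all t ≥ t0. Then for every a > 0 and every u ≥ 0, E[ f(a·√(X + 1)) · g(u + X) ] = ∞. -/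
open MeasureTheory ProbabilityTheory Filter Set
open scoped ENNReal Classical

noncomputable section

namespace DynkinGame

/-- if `f ≥ 0` on `[0, ∞)` with `liminf_{x→∞} f x / x^γ > 0`, `X ≥ 0` is a
random variable and `g` a nonincreasing nonnegative function such that both
`P(X > t - 1)` and `g(t)` dominate `c t^{-β}` for large `t`, where `0 < β < γ/4`, then
`E[f(a √(X+1)) g(u + X)] = ∞` for every `a > 0`, `u ≥ 0`. -/
theorem expectation_of_sqrt_boundary_payoff_infinite
    {Ω : Type*} [MeasurableSpace Ω] (P : Measure Ω) [IsProbabilityMeasure P]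
    (f : ℝ → ℝ) (hf : Measurable f) (hf0 : ∀ x ≥ (0 : ℝ), 0 ≤ f x)
    (γ : ℝ) (hγ : 0 < γ) (hliminf : 0 < liminf (fun x : ℝ => f x / x ^ γ) atTop)
    (X : Ω → ℝ) (hX : Measurable X) (hX0 : ∀ ω, 0 ≤ X ω)
    (g : ℝ → ℝ) (hg : AntitoneOn g (Set.Ici 0)) (hg0 : ∀ t ≥ (0 : ℝ), 0 ≤ g t)
    (c t₀ β : ℝ) (hc : 0 < c) (ht₀ : 0 < t₀) (hβ : 0 < β) (hβγ : β < γ / 4)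
    (htail : ∀ t ≥ t₀, c * t ^ (-β) ≤ (P {ω | t - 1 < X ω}).toReal)
    (hgt : ∀ t ≥ t₀, c * t ^ (-β) ≤ g t)
    (a u : ℝ) (ha : 0 < a) (hu : 0 ≤ u) :
    EE P (fun ω => f (a * Real.sqrt (X ω + 1)) * g (u + X ω)) = ⊤ := by
  classical
  -- extract ε, M from liminf
  have hSsup : liminf (fun x : ℝ => f x / x ^ γ) atTop
      = sSup {b : ℝ | ∀ᶠ x in atTop, b ≤ f x / x ^ γ} := liminf_eq
  have hSne : {b : ℝ | ∀ᶠ x in atTop, b ≤ f x / x ^ γ}.Nonempty := by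
    by_contra h
    rw [hSsup, Set.not_nonempty_iff_eq_empty.1 h, Real.sSup_empty] at hliminf
    exact lt_irrefl 0 hliminf
  obtain ⟨ε, hεmem, hε⟩ := exists_lt_of_lt_csSup hSne (by rw [← hSsup]; exact hliminf)
  obtain ⟨M0, hM0⟩ := Filter.eventually_atTop.1 hεmem
  set M : ℝ := max M0 1 with hMdef
  have hM1 : (1:ℝ) ≤ M := le_max_right _ _
  have key : ∀ x : ℝ, M ≤ x → ε * x ^ γ ≤ f x := by
    intro x hx
    have hx0 : (0:ℝ) < x := lt_of_lt_of_le one_pos (le_trans hM1 hx)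
    have := hM0 x (le_trans (le_max_left _ _) hx)
    rwa [le_div_iff₀ (Real.rpow_pos_of_pos hx0 γ)] at this
  set K : ℝ := ε * a ^ γ * c * (u + 1) ^ (-β) with hKdef
  have hK : 0 < K := by positivity
  set T₀ : ℝ := max (max (t₀ + 1) ((M / a) ^ 2)) 1 with hT₀
  set I : ℝ≥0∞ := ∫⁻ ω, ENNReal.ofReal (f (a * Real.sqrt (X ω + 1)) * g (u + X ω)) ∂P with hIdef
  have main : ∀ t : ℝ, T₀ ≤ t → ENNReal.ofReal (K * c * t ^ (γ/2 - 2*β)) ≤ I := by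
    intro t ht
    have ht1 : (1:ℝ) ≤ t := le_trans (le_max_right _ _) ht
    have htpos : (0:ℝ) < t := lt_of_lt_of_le one_pos ht1
    have htt₀ : t₀ + 1 ≤ t := le_trans (le_trans (le_max_left _ _) (le_max_left _ _)) ht
    have htM : (M / a) ^ 2 ≤ t := le_trans (le_trans (le_max_right _ _) (le_max_left _ _)) ht
    set A : Set Ω := {ω | t - 1 < X ω} with hAdef
    have hAm : MeasurableSet A := measurableSet_lt measurable_const hX
    have hpt : ∀ ω ∈ A, K * t ^ (γ/2 - β) ≤ f (a * Real.sqrt (X ω + 1)) * g (u + X ω) := by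
      intro ω hω
      set Y : ℝ := X ω with hYdef
      have hY : t - 1 < Y := hω
      have hY0 : 0 ≤ Y := hX0 ω
      have hY1 : t ≤ Y + 1 := by linarith
      have hb : (0:ℝ) < Y + 1 := by linarith
      -- sqrt lower bound
      have hMa : M ≤ a * Real.sqrt t := by
        have h1 : M / a ≤ Real.sqrt t := by
          rw [show M / a = Real.sqrt ((M / a) ^ 2) from (Real.sqrt_sq (by positivity)).symm]
          exact Real.sqrt_le_sqrt htM
        calc M = a * (M / a) := by field_simp
          _ ≤ a * Real.sqrt t := mul_le_mul_of_nonneg_left h1 ha.le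
      have hsM : M ≤ a * Real.sqrt (Y + 1) :=
        le_trans hMa (mul_le_mul_of_nonneg_left (Real.sqrt_le_sqrt hY1) ha.le)
      have hf_lb : ε * (a * Real.sqrt (Y + 1)) ^ γ ≤ f (a * Real.sqrt (Y + 1)) := key _ hsM
      have hrw : (a * Real.sqrt (Y + 1)) ^ γ = a ^ γ * (Y + 1) ^ (γ / 2) := by
        rw [Real.mul_rpow ha.le (Real.sqrt_nonneg _), Real.sqrt_eq_rpow,
          ← Real.rpow_mul hb.le, show (1:ℝ)/2 * γ = γ/2 by ring]
      have hg_lb : c * (u + Y) ^ (-β) ≤ g (u + Y) := hgt _ (by linarith)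
      have huY : (0:ℝ) < u + Y := by linarith
      have h1 : u + Y ≤ (u + 1) * (Y + 1) := by nlinarith
      have h2 : ((u + 1) * (Y + 1)) ^ (-β) ≤ (u + Y) ^ (-β) :=
        Real.rpow_le_rpow_of_nonpos huY h1 (by linarith)
      have h3 : ((u + 1) * (Y + 1)) ^ (-β) = (u + 1) ^ (-β) * (Y + 1) ^ (-β) :=
        Real.mul_rpow (by linarith) hb.le
      have hGlb : c * ((u + 1) ^ (-β) * (Y + 1) ^ (-β)) ≤ g (u + Y) := by
        have : c * ((u + 1) ^ (-β) * (Y + 1) ^ (-β)) ≤ c * (u + Y) ^ (-β) := by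
          rw [← h3]; exact mul_le_mul_of_nonneg_left h2 hc.le
        linarith
      have hFpos : 0 < ε * (a * Real.sqrt (Y + 1)) ^ γ := by positivity
      have hprod : (ε * (a * Real.sqrt (Y + 1)) ^ γ) * (c * ((u + 1) ^ (-β) * (Y + 1) ^ (-β)))
          ≤ f (a * Real.sqrt (Y + 1)) * g (u + Y) :=
        mul_le_mul hf_lb hGlb (by positivity) (le_trans hFpos.le hf_lb)
      have heq : (ε * (a * Real.sqrt (Y + 1)) ^ γ) * (c * ((u + 1) ^ (-β) * (Y + 1) ^ (-β)))
          = K * (Y + 1) ^ (γ/2 - β) := by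
        rw [hrw, hKdef, show γ/2 - β = γ/2 + (-β) by ring, Real.rpow_add hb]
        ring
      have hmono : K * t ^ (γ/2 - β) ≤ K * (Y + 1) ^ (γ/2 - β) :=
        mul_le_mul_of_nonneg_left
          (Real.rpow_le_rpow htpos.le hY1 (by linarith)) hK.le
      calc K * t ^ (γ/2 - β) ≤ K * (Y + 1) ^ (γ/2 - β) := hmono
        _ = _ := heq.symm
        _ ≤ _ := hprod
    calc ENNReal.ofReal (K * c * t ^ (γ/2 - 2*β))
        = ENNReal.ofReal (K * t ^ (γ/2 - β)) * ENNReal.ofReal (c * t ^ (-β)) := by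
          rw [← ENNReal.ofReal_mul (by positivity)]
          congr 1
          rw [show γ/2 - 2*β = (γ/2 - β) + (-β) by ring, Real.rpow_add htpos]
          ring
      _ ≤ ENNReal.ofReal (K * t ^ (γ/2 - β)) * P A := by
          exact mul_le_mul_right (ENNReal.ofReal_le_of_le_toReal (htail t (by linarith))) _
      _ = ∫⁻ ω, A.indicator (fun _ => ENNReal.ofReal (K * t ^ (γ/2 - β))) ω ∂P := by
          rw [lintegral_indicator_const hAm]
      _ ≤ I := by
          refine lintegral_mono fun ω => ?_
          by_cases hω : ω ∈ A
          · rw [Set.indicator_of_mem hω]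
            exact ENNReal.ofReal_le_ofReal (hpt ω hω)
          · rw [Set.indicator_of_notMem hω]; exact zero_le
  have hItop : I = ⊤ := by
    by_contra hne
    obtain ⟨t, ht0, htbig⟩ : ∃ t : ℝ, T₀ ≤ t ∧ (I.toReal + 1) / (K * c) ≤ t ^ (γ/2 - 2*β) := by
      have h := (tendsto_rpow_atTop (by linarith : (0:ℝ) < γ/2 - 2*β)).eventually_ge_atTop
        ((I.toReal + 1) / (K * c))
      exact ((eventually_ge_atTop T₀).and h).exists
    have h := main t ht0
    rw [ENNReal.ofReal_le_iff_le_toReal hne] at h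
    rw [div_le_iff₀ (by positivity)] at htbig
    nlinarith [htbig, h]
  have hneg : (∫⁻ ω, ENNReal.ofReal (-(f (a * Real.sqrt (X ω + 1)) * g (u + X ω))) ∂P) = 0 := by
    have hz : ∀ ω, ENNReal.ofReal (-(f (a * Real.sqrt (X ω + 1)) * g (u + X ω))) = 0 := by
      intro ω
      rw [ENNReal.ofReal_eq_zero]
      have h1 : 0 ≤ f (a * Real.sqrt (X ω + 1)) := hf0 _ (by positivity)
      have h2 : 0 ≤ g (u + X ω) := hg0 _ (by linarith [hX0 ω])
      nlinarith
    simp only [hz, lintegral_zero]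
  rw [EE, hneg]
  rw [show (∫⁻ ω, ENNReal.ofReal (f (a * Real.sqrt (X ω + 1)) * g (u + X ω)) ∂P) = I from rfl,
    hItop]
  simp

end DynkinGame
end
end

section
/- (Theorem 3.1, Part IV(b)) Suppose the reward function satisfies (A4), i.e., f(x) = kx for all x ∈ ℝ with some k > 0. Then the pair of trivial stopping times (τ1, τ2) = (0, 0) is a Nash equilibrium of the two-player stopping game started at (x1, x2) if and only if min(x1, x2) ≥ 0. -/
open MeasureTheory ProbabilityTheory Filter Set
open scoped ENNReal Classical

noncomputable section

namespace DynkinGame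

section Aux

variable {Ω : Type*} [MeasurableSpace Ω]

lemma payoff_zero_zero (f : ℝ → ℝ) (x : ℝ) (W : ℝ → Ω → ℝ) (h0 : ∀ ω, W 0 ω = 0) (ω : Ω) :
    payoff f x W (fun _ => 0) (fun _ => 0) ω = f x * (1 / 2) := by
  simp [payoff, stopVal, h0]

lemma payoff_vs_zero (f : ℝ → ℝ) (x : ℝ) (W : ℝ → Ω → ℝ) (h0 : ∀ ω, W 0 ω = 0)
    (σ : Ω → ℝ≥0∞) (ω : Ω) :
    payoff f x W σ (fun _ => 0) ω = if σ ω = 0 then f x * (1 / 2) else 0 := by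
  by_cases h : σ ω = 0
  · simp [payoff, stopVal, h, h0]
  · simp [payoff, stopVal, h]

lemma payoff_top_zero (f : ℝ → ℝ) (x : ℝ) (W : ℝ → Ω → ℝ) (ω : Ω) :
    payoff f x W (fun _ => (⊤ : ℝ≥0∞)) (fun _ => 0) ω = 0 := by
  simp [payoff]

lemma adm_zero (P : Measure Ω) [IsProbabilityMeasure P] (f : ℝ → ℝ) (x : ℝ)
    (W : ℝ → Ω → ℝ) (h0 : ∀ ω, W 0 ω = 0) : Adm P f x W (fun _ => 0) := by
  refine ⟨fun t ht => ?_, Or.inl ?_⟩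
  · have : {ω : Ω | (0 : ℝ≥0∞) ≤ ENNReal.ofReal t} = Set.univ := by simp
    rw [this]; exact MeasurableSet.univ
  · have : (fun ω : Ω => ENNReal.ofReal (f (x + stopVal W (fun _ => 0) ω)))
        = fun _ => ENNReal.ofReal (f x) := by
      funext ω; simp [stopVal, h0]
    rw [this, lintegral_const]
    exact ENNReal.mul_ne_top ENNReal.ofReal_ne_top (measure_ne_top _ _)

lemma adm_top (P : Measure Ω) [IsProbabilityMeasure P] (f : ℝ → ℝ) (x : ℝ)
    (W : ℝ → Ω → ℝ) (h0 : ∀ ω, W 0 ω = 0) : Adm P f x W (fun _ => (⊤ : ℝ≥0∞)) := by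
  refine ⟨fun t ht => ?_, Or.inl ?_⟩
  · have : {ω : Ω | (⊤ : ℝ≥0∞) ≤ ENNReal.ofReal t} = (∅ : Set Ω) := by
      ext ω; simp [ENNReal.ofReal_ne_top, top_le_iff, (ENNReal.ofReal_lt_top).ne']
    rw [this]; exact @MeasurableSet.empty _ (natFilt W t)
  · have : (fun ω : Ω => ENNReal.ofReal (f (x + stopVal W (fun _ => (⊤ : ℝ≥0∞)) ω)))
        = fun _ => ENNReal.ofReal (f x) := by
      funext ω; simp [stopVal, h0]
    rw [this, lintegral_const]
    exact ENNReal.mul_ne_top ENNReal.ofReal_ne_top (measure_ne_top _ _)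

lemma J_vs_zero_le (P : Measure Ω) [IsProbabilityMeasure P] (f : ℝ → ℝ) (k x : ℝ)
    (hk : 0 < k) (hA4 : ∀ y : ℝ, f y = k * y) (hx : 0 ≤ x)
    (W : ℝ → Ω → ℝ) (h0 : ∀ ω, W 0 ω = 0) (σ : Ω → ℝ≥0∞) :
    J P f x W σ (fun _ => 0) ≤ J P f x W (fun _ => 0) (fun _ => 0) := by
  have hfx : 0 ≤ f x * (1 / 2) := by
    rw [hA4]; positivity
  have hB1 : ∀ ω, ENNReal.ofReal (-payoff f x W σ (fun _ => 0) ω) = 0 := by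
    intro ω
    rw [payoff_vs_zero f x W h0 σ ω]
    by_cases h : σ ω = 0
    · rw [if_pos h, ENNReal.ofReal_eq_zero]; linarith
    · rw [if_neg h, neg_zero, ENNReal.ofReal_zero]
  have hB2 : ∀ ω : Ω, ENNReal.ofReal (-payoff f x W (fun _ => 0) (fun _ => 0) ω) = 0 := by
    intro ω
    rw [payoff_zero_zero f x W h0 ω, ENNReal.ofReal_eq_zero]
    linarith
  have hA : (∫⁻ ω, ENNReal.ofReal (payoff f x W σ (fun _ => 0) ω) ∂P)
      ≤ (∫⁻ ω, ENNReal.ofReal (payoff f x W (fun _ => 0) (fun _ => 0) ω) ∂P) := by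
    refine lintegral_mono fun ω => ENNReal.ofReal_le_ofReal ?_
    rw [payoff_vs_zero f x W h0 σ ω, payoff_zero_zero f x W h0 ω]
    by_cases h : σ ω = 0
    · rw [if_pos h]
    · rw [if_neg h]; exact hfx
  unfold J EE
  simp only [hB1, hB2, lintegral_zero]
  rw [EReal.coe_ennreal_zero, sub_zero, sub_zero]
  exact_mod_cast hA

lemma not_J_top_le (P : Measure Ω) [IsProbabilityMeasure P] (f : ℝ → ℝ) (k x : ℝ)
    (hk : 0 < k) (hA4 : ∀ y : ℝ, f y = k * y) (hx : x < 0)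
    (W : ℝ → Ω → ℝ) (h0 : ∀ ω, W 0 ω = 0) :
    ¬ J P f x W (fun _ => (⊤ : ℝ≥0∞)) (fun _ => 0)
        ≤ J P f x W (fun _ => 0) (fun _ => 0) := by
  have hfx : f x * (1 / 2) < 0 := by
    rw [hA4]; nlinarith
  have hP1 : ∀ ω : Ω, ENNReal.ofReal (payoff f x W (fun _ => (⊤ : ℝ≥0∞)) (fun _ => 0) ω) = 0 := by
    intro ω; rw [payoff_top_zero]; simp
  have hN1 : ∀ ω : Ω, ENNReal.ofReal (-payoff f x W (fun _ => (⊤ : ℝ≥0∞)) (fun _ => 0) ω) = 0 := by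
    intro ω; rw [payoff_top_zero]; simp
  have hP2 : ∀ ω : Ω, ENNReal.ofReal (payoff f x W (fun _ => 0) (fun _ => 0) ω) = 0 := by
    intro ω; rw [payoff_zero_zero f x W h0 ω]
    exact ENNReal.ofReal_eq_zero.mpr hfx.le
  have hN2 : ∀ ω : Ω, ENNReal.ofReal (-payoff f x W (fun _ => 0) (fun _ => 0) ω)
      = ENNReal.ofReal (-(f x * (1 / 2))) := by
    intro ω; rw [payoff_zero_zero f x W h0 ω]
  unfold J EE
  simp only [hP1, hN1, hP2, hN2, lintegral_zero, lintegral_const, measure_univ, mul_one]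
  rw [EReal.coe_ennreal_zero, sub_zero, zero_sub]
  intro h
  have hb : (0 : ℝ≥0∞) < ENNReal.ofReal (-(f x * (1 / 2))) := by
    rw [ENNReal.ofReal_pos]; linarith
  have h2 : (0 : EReal) < (ENNReal.ofReal (-(f x * (1 / 2))) : ℝ≥0∞) := by
    exact_mod_cast hb
  have h' : -(0 : EReal) ≤ -((ENNReal.ofReal (-(f x * (1 / 2))) : ℝ≥0∞) : EReal) := by
    rwa [neg_zero]
  exact absurd (h2.trans_le (EReal.neg_le_neg_iff.mp h')) (lt_irrefl _)

end Aux

/-- Theorem 3.1, Part IV(b): under (A4) (`f(x) = kx`, `k > 0`), the pair of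
trivial stopping times `(0, 0)` is a Nash equilibrium started at `(x₁, x₂)` if and only
if `min (x₁, x₂) ≥ 0`. -/
theorem trivial_pair_equilibrium_iff
    {Ω : Type*} [MeasurableSpace Ω] (P : Measure Ω) (W₁ W₂ : ℝ → Ω → ℝ)
    (hs : Setup P W₁ W₂) (f : ℝ → ℝ) (k : ℝ) (hk : 0 < k)
    (hA4 : ∀ x : ℝ, f x = k * x) (x₁ x₂ : ℝ) :
    Nash P f x₁ x₂ W₁ W₂ (fun _ => 0) (fun _ => 0) ↔ 0 ≤ min x₁ x₂ := by
  haveI := hs.prob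
  have h01 : ∀ ω, W₁ 0 ω = 0 := hs.bm₁.init
  have h02 : ∀ ω, W₂ 0 ω = 0 := hs.bm₂.init
  constructor
  · rintro ⟨-, -, h₁, h₂⟩
    rw [le_min_iff]
    constructor
    · by_contra hx
      push_neg at hx
      exact not_J_top_le P f k x₁ hk hA4 hx W₁ h01
        (h₁ (fun _ => ⊤) (adm_top P f x₁ W₁ h01))
    · by_contra hx
      push_neg at hx
      exact not_J_top_le P f k x₂ hk hA4 hx W₂ h02
        (h₂ (fun _ => ⊤) (adm_top P f x₂ W₂ h02))
  · intro hx
    obtain ⟨hx₁, hx₂⟩ := le_min_iff.mp hx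
    exact ⟨adm_zero P f x₁ W₁ h01, adm_zero P f x₂ W₂ h02,
      fun σ _ => J_vs_zero_le P f k x₁ hk hA4 hx₁ W₁ h01 σ,
      fun σ _ => J_vs_zero_le P f k x₂ hk hA4 hx₂ W₂ h02 σ⟩

end DynkinGame
end
end

section
/- Let W be a standard Brownian motion with natural filtration (F_t), let c: [0,∞] → [0,1] be nonincreasing with c(∞) = 0, let k > 0 and fix t ≥ 0. For s ≥ 0 set B_s := W_{t+s} − W_t (a standard Brownian motion independent of F_t). Suppose x ∈ ℝ is such that k·x·c(t) ≥ E[ k·(x + B_τ)·c(t + τ) ] for every stopping time τ of B for which the right-hand side is well defined. Then for every y > x, one also has k·y·c(t) ≥ E[ k·(y + B_τ)·c(t + τ) ] for every such stopping time τ. -/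
open MeasureTheory ProbabilityTheory Filter Set
open scoped ENNReal Classical

noncomputable section

namespace DynkinGame

private theorem aux_ofReal_split (u d : ℝ) (hd : 0 ≤ d) :
    ENNReal.ofReal (u + d) + ENNReal.ofReal (-u)
      = ENNReal.ofReal u + (ENNReal.ofReal (-(u + d)) + ENNReal.ofReal d) := by
  have m1 : ∀ p : ℝ, ENNReal.ofReal p = ENNReal.ofReal (max p 0) := by
    intro p
    rcases le_total p 0 with h | h
    · rw [max_eq_right h, ENNReal.ofReal_of_nonpos h, ENNReal.ofReal_zero]
    · rw [max_eq_left h]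
  rw [m1 (u + d), m1 (-u), m1 u, m1 (-(u + d)),
    ← ENNReal.ofReal_add (le_max_right _ _) (le_max_right _ _),
    ← ENNReal.ofReal_add (le_max_right _ _) hd,
    ← ENNReal.ofReal_add (le_max_right _ _) (by positivity)]
  congr 1
  rcases le_total u 0 with h | h <;> rcases le_total (u + d) 0 with h' | h'
  · rw [max_eq_right h', max_eq_left (neg_nonneg.2 h), max_eq_right h,
      max_eq_left (neg_nonneg.2 h')]; ring
  · rw [max_eq_left h', max_eq_left (neg_nonneg.2 h), max_eq_right h,
      max_eq_right (by linarith : -(u + d) ≤ 0)]; ring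
  · have hu0 : u = 0 := le_antisymm (by linarith) h
    have hd0 : d = 0 := by linarith
    subst hu0; subst hd0; simp
  · rw [max_eq_left h', max_eq_right (by linarith : -u ≤ 0), max_eq_left h,
      max_eq_right (by linarith : -(u + d) ≤ 0)]; ring

private theorem aux_coe (z : ℝ≥0∞) (hz : z ≠ ⊤) : ((z.toReal : ℝ) : EReal) = (z : EReal) := by
  have h1 : (z : EReal) ≠ ⊤ := by simp [EReal.coe_ennreal_eq_top_iff, hz]
  have h2 : (z : EReal) ≠ ⊥ := EReal.coe_ennreal_ne_bot z
  rw [← EReal.toReal_coe_ennreal (x := z), EReal.coe_toReal h1 h2]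

open scoped Topology in
/-- monotonicity of the stopping region for the linear-reward discounted
problem: if immediate stopping at the space-time point `(x, t)` dominates every stopping
time of the post-`t` Brownian motion `B_s = W_{t+s} - W_t`, then the same holds at
`(y, t)` for every `y > x`. -/
theorem stopping_region_upward_closed
    {Ω : Type*} [MeasurableSpace Ω] (P : Measure Ω) [IsProbabilityMeasure P]
    (W : ℝ → Ω → ℝ) (hW : IsBM P W)
    (c : ℝ≥0∞ → ℝ) (hc : Antitone c) (hc01 : ∀ s, c s ∈ Set.Icc (0 : ℝ) 1)
    (hctop : c ⊤ = 0)
    (k : ℝ) (hk : 0 < k) (t : ℝ) (ht : 0 ≤ t)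
    (B : ℝ → Ω → ℝ) (hB : B = fun s ω => W (t + s) ω - W t ω)
    (x : ℝ)
    (hx : ∀ τ : Ω → ℝ≥0∞, IsStopTime B τ →
      WellDef P (fun ω => k * (x + stopVal B τ ω) * c (ENNReal.ofReal t + τ ω)) →
      EE P (fun ω => k * (x + stopVal B τ ω) * c (ENNReal.ofReal t + τ ω)) ≤
        ((k * x * c (ENNReal.ofReal t) : ℝ) : EReal)) :
    ∀ y : ℝ, x < y → ∀ τ : Ω → ℝ≥0∞, IsStopTime B τ →
      WellDef P (fun ω => k * (y + stopVal B τ ω) * c (ENNReal.ofReal t + τ ω)) →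
      EE P (fun ω => k * (y + stopVal B τ ω) * c (ENNReal.ofReal t + τ ω)) ≤
        ((k * y * c (ENNReal.ofReal t) : ℝ) : EReal) := by
  intro y hxy τ hτ hWD
  have hBmeas : ∀ s, Measurable (B s) := by
    intro s; rw [hB]; exact (hW.meas (t + s)).sub (hW.meas t)
  have hτm : Measurable τ := by
    apply measurable_of_Iic
    intro u
    by_cases hu : u = ⊤
    · simp [hu]
    · have hle : natFilt B u.toReal ≤ (inferInstance : MeasurableSpace Ω) :=
        iSup₂_le fun s _ => (hBmeas s).comap_le
      have h1 := hle _ (hτ u.toReal ENNReal.toReal_nonneg)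
      have h2 : τ ⁻¹' Iic u = {ω | τ ω ≤ ENNReal.ofReal u.toReal} := by
        rw [ENNReal.ofReal_toReal hu]; rfl
      rw [h2]; exact h1
  have hg : AEMeasurable (stopVal B τ) P := by
    have hfn : ∀ n : ℕ, Measurable fun ω => B ((⌈(τ ω).toReal * 2 ^ n⌉₊ : ℝ) / 2 ^ n) ω := by
      intro n
      have he : Measurable fun ω => ⌈(τ ω).toReal * (2 : ℝ) ^ n⌉₊ :=
        (hτm.ennreal_toReal.mul measurable_const).nat_ceil
      have hF : Measurable fun p : Ω × ℕ => B ((p.2 : ℝ) / 2 ^ n) p.1 :=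
        measurable_from_prod_countable_left fun m => by simpa using hBmeas ((m : ℝ) / 2 ^ n)
      exact hF.comp (measurable_id.prodMk he)
    refine aemeasurable_of_tendsto_metrizable_ae atTop (fun n => (hfn n).aemeasurable) ?_
    filter_upwards [hW.cont] with ω hcont
    have hBc : Continuous fun s => B s ω := by
      rw [hB]
      exact (hcont.comp (continuous_const.add continuous_id)).sub continuous_const
    set r := (τ ω).toReal with hr
    have hr0 : 0 ≤ r := ENNReal.toReal_nonneg
    have hq : Tendsto (fun n : ℕ => (⌈r * 2 ^ n⌉₊ : ℝ) / 2 ^ n) atTop (𝓝 r) := by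
      have h1 : ∀ n : ℕ, r ≤ (⌈r * 2 ^ n⌉₊ : ℝ) / 2 ^ n := by
        intro n
        rw [le_div_iff₀ (by positivity)]
        exact Nat.le_ceil _
      have h2 : ∀ n : ℕ, (⌈r * 2 ^ n⌉₊ : ℝ) / 2 ^ n ≤ r + (1 / 2) ^ n := by
        intro n
        rw [div_le_iff₀ (by positivity)]
        have hce := (Nat.ceil_lt_add_one (by positivity : (0:ℝ) ≤ r * 2 ^ n)).le
        have hpow : ((1:ℝ) / 2) ^ n * 2 ^ n = 1 := by
          rw [← mul_pow]; norm_num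
        have hexp : (r + (1 / 2) ^ n) * 2 ^ n = r * 2 ^ n + 1 := by
          rw [add_mul, hpow]
        linarith
      have hlim : Tendsto (fun n : ℕ => r + (1 / 2 : ℝ) ^ n) atTop (𝓝 r) := by
        have h0 := tendsto_pow_atTop_nhds_zero_of_lt_one
          (by norm_num : (0:ℝ) ≤ 1 / 2) (by norm_num : (1 / 2 : ℝ) < 1)
        simpa using tendsto_const_nhds.add h0
      exact tendsto_of_tendsto_of_tendsto_of_le_of_le tendsto_const_nhds hlim h1 h2
    exact (hBc.tendsto r).comp hq
  have hcm : Measurable c := hc.measurable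
  have hccomp : Measurable fun ω => c (ENNReal.ofReal t + τ ω) :=
    hcm.comp (measurable_const.add hτm)
  set X : Ω → ℝ := fun ω => k * (x + stopVal B τ ω) * c (ENNReal.ofReal t + τ ω) with hXdef
  set Y : Ω → ℝ := fun ω => k * (y + stopVal B τ ω) * c (ENNReal.ofReal t + τ ω) with hYdef
  set D : Ω → ℝ := fun ω => k * (y - x) * c (ENNReal.ofReal t + τ ω) with hDdef
  have hXm : AEMeasurable X P := by
    rw [hXdef]
    exact ((aemeasurable_const.add hg).const_mul k).mul hccomp.aemeasurable
  have hYm : AEMeasurable Y P := by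
    rw [hYdef]
    exact ((aemeasurable_const.add hg).const_mul k).mul hccomp.aemeasurable
  have hDm : Measurable D := by
    rw [hDdef]
    exact hccomp.const_mul _
  have hYXD : ∀ ω, Y ω = X ω + D ω := by
    intro ω; simp only [hXdef, hYdef, hDdef]; ring
  have hc0 : ∀ s, 0 ≤ c s := fun s => (hc01 s).1
  have hD0 : ∀ ω, 0 ≤ D ω := by
    intro ω; simp only [hDdef]
    exact mul_nonneg (mul_nonneg hk.le (by linarith)) (hc0 _)
  set C : ℝ := k * (y - x) * c (ENNReal.ofReal t) with hCdef
  have hC0 : 0 ≤ C := by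
    rw [hCdef]
    exact mul_nonneg (mul_nonneg hk.le (by linarith)) (hc0 _)
  have hDC : ∀ ω, D ω ≤ C := by
    intro ω
    have hmono := hc (le_self_add : ENNReal.ofReal t ≤ ENNReal.ofReal t + τ ω)
    simp only [hDdef, hCdef]
    exact mul_le_mul_of_nonneg_left hmono (mul_nonneg hk.le (by linarith))
  unfold EE
  set a' := ∫⁻ ω, ENNReal.ofReal (Y ω) ∂P with ha'def
  set b' := ∫⁻ ω, ENNReal.ofReal (-Y ω) ∂P with hb'def
  set a := ∫⁻ ω, ENNReal.ofReal (X ω) ∂P with hadef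
  set b := ∫⁻ ω, ENNReal.ofReal (-X ω) ∂P with hbdef
  set dd := ∫⁻ ω, ENNReal.ofReal (D ω) ∂P with hdddef
  have hXof : AEMeasurable (fun ω => ENNReal.ofReal (X ω)) P :=
    ENNReal.measurable_ofReal.comp_aemeasurable hXm
  have hYof : AEMeasurable (fun ω => ENNReal.ofReal (Y ω)) P :=
    ENNReal.measurable_ofReal.comp_aemeasurable hYm
  have key : a' + b = a + (b' + dd) := by
    have h1 : a' + b = ∫⁻ ω, (ENNReal.ofReal (Y ω) + ENNReal.ofReal (-X ω)) ∂P :=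
      (lintegral_add_left' hYof _).symm
    have h2 : ∫⁻ ω, (ENNReal.ofReal (-Y ω) + ENNReal.ofReal (D ω)) ∂P = b' + dd :=
      lintegral_add_right' _ hDm.ennreal_ofReal.aemeasurable
    have h3 : a + (b' + dd) =
        ∫⁻ ω, (ENNReal.ofReal (X ω) + (ENNReal.ofReal (-Y ω) + ENNReal.ofReal (D ω))) ∂P := by
      rw [lintegral_add_left' hXof, h2]
    rw [h1, h3]
    refine lintegral_congr fun ω => ?_
    rw [hYXD ω]
    exact aux_ofReal_split (X ω) (D ω) (hD0 ω)
  have hddle : dd ≤ ENNReal.ofReal C := by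
    calc dd ≤ ∫⁻ _, ENNReal.ofReal C ∂P :=
          lintegral_mono fun ω => ENNReal.ofReal_le_ofReal (hDC ω)
      _ = ENNReal.ofReal C := by rw [lintegral_const, measure_univ, mul_one]
  have hddne : dd ≠ ⊤ := ne_top_of_le_ne_top ENNReal.ofReal_ne_top hddle
  have hb_le : b ≤ b' + ENNReal.ofReal C := by
    have hmono : b ≤ ∫⁻ ω, (ENNReal.ofReal (-Y ω) + ENNReal.ofReal C) ∂P := by
      refine lintegral_mono fun ω => ?_
      have hXY : -X ω ≤ -Y ω + C := by
        have h4 := hYXD ω; have h5 := hDC ω; linarith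
      calc ENNReal.ofReal (-X ω) ≤ ENNReal.ofReal (-Y ω + C) := ENNReal.ofReal_le_ofReal hXY
        _ ≤ ENNReal.ofReal (-Y ω) + ENNReal.ofReal C := ENNReal.ofReal_add_le
    rwa [lintegral_add_right' _ aemeasurable_const, lintegral_const, measure_univ,
      mul_one] at hmono
  by_cases hb' : b' = ⊤
  · rw [hb', EReal.coe_ennreal_top, EReal.sub_top]; exact bot_le
  · have hbne : b ≠ ⊤ :=
      ne_top_of_le_ne_top (ENNReal.add_ne_top.2 ⟨hb', ENNReal.ofReal_ne_top⟩) hb_le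
    have hwdX : WellDef P (fun ω => k * (x + stopVal B τ ω) * c (ENNReal.ofReal t + τ ω)) := by
      rw [← hXdef]
      exact Or.inr (hbdef ▸ hbne)
    have hxle := hx τ hτ hwdX
    rw [← hXdef] at hxle
    unfold EE at hxle
    rw [← hadef, ← hbdef] at hxle
    have hane : a ≠ ⊤ := by
      intro h
      rw [h, EReal.coe_ennreal_top, ← aux_coe b hbne, EReal.top_sub_coe] at hxle
      exact (EReal.coe_lt_top _).not_ge hxle
    have ha'ne : a' ≠ ⊤ := by
      have h1 : a' ≤ a + (b' + dd) := key ▸ le_self_add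
      exact ne_top_of_le_ne_top
        (ENNReal.add_ne_top.2 ⟨hane, ENNReal.add_ne_top.2 ⟨hb', hddne⟩⟩) h1
    have keyR : a'.toReal + b.toReal = a.toReal + (b'.toReal + dd.toReal) := by
      have h1 := congrArg ENNReal.toReal key
      rwa [ENNReal.toReal_add ha'ne hbne,
        ENNReal.toReal_add hane (ENNReal.add_ne_top.2 ⟨hb', hddne⟩),
        ENNReal.toReal_add hb' hddne] at h1
    have hddR : dd.toReal ≤ C := by
      have h1 := ENNReal.toReal_mono ENNReal.ofReal_ne_top hddle
      rwa [ENNReal.toReal_ofReal hC0] at h1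
    have hxleR : a.toReal - b.toReal ≤ k * x * c (ENNReal.ofReal t) := by
      rw [← aux_coe a hane, ← aux_coe b hbne, ← EReal.coe_sub] at hxle
      exact EReal.coe_le_coe_iff.1 hxle
    rw [← aux_coe a' ha'ne, ← aux_coe b' hb', ← EReal.coe_sub, EReal.coe_le_coe_iff]
    have hCC : k * y * c (ENNReal.ofReal t) = k * x * c (ENNReal.ofReal t) + C := by
      rw [hCdef]; ring
    linarith


end DynkinGame
end
end
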